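/- Let X ∈ ℝ^{n×k}, ε ∈ ℝ^n, β* ∈ ℝ^k, y = Xβ* + ε, and λ > 0. Suppose the minimum eigenvalue of (1/n)XᵀX is at least c_min > 0, and β̂ minimizes L_λ(β) = (1/(2n))‖y − Xβ‖₂² + λ∑_{j=1}^k |β_j| over ℝ^k. Then ‖β̂ − β*‖_∞ ≤ λ√k/c_min + ‖((1/n)XᵀX)⁻¹ (1/n)Xᵀε‖_∞, where ‖v‖_∞ = max_j |v_j|. -/

import Mathlib

open Matrix

/-- The Lasso objective `L_λ(β) = (1/(2n)) ‖y − Xβ‖₂² + λ ∑_j |β_j|`. -/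
noncomputable def lassoObj {n p : ℕ} (X : Matrix (Fin n) (Fin p) ℝ) (y : Fin n → ℝ)
    (lam : ℝ) (β : Fin p → ℝ) : ℝ :=
  (1 / (2 * (n : ℝ))) * ∑ i, (y i - X.mulVec β i) ^ 2 + lam * ∑ j, |β j|

/-- The `ℓ∞` norm `‖v‖_∞ = max_j |v_j|` of a vector on a nonempty `Fin k`. -/
noncomputable def linf {k : ℕ} (hk : 0 < k) (v : Fin k → ℝ) : ℝ :=
  Finset.univ.sup' ⟨⟨0, hk⟩, Finset.mem_univ _⟩ fun j => |v j|

set_option maxHeartbeats 2000000 in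
/-- Deterministic `ℓ∞` estimation error bound: if the minimum eigenvalue of
`(1/n)XᵀX` is at least `c_min > 0` (stated via the quadratic form) and `β̂` is a
Lasso minimizer for `y = Xβ* + ε`, then
`‖β̂ − β*‖_∞ ≤ λ√k/c_min + ‖((1/n)XᵀX)⁻¹ (1/n)Xᵀε‖_∞`. -/
theorem lasso_linf_error_bound {n k : ℕ} (hn : 0 < n) (hk : 0 < k)
    (X : Matrix (Fin n) (Fin k) ℝ) (ε : Fin n → ℝ) (βstar : Fin k → ℝ)
    (y : Fin n → ℝ) (hy : y = X.mulVec βstar + ε)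
    (lam : ℝ) (hlam : 0 < lam)
    (cmin : ℝ) (hc : 0 < cmin)
    (heig : ∀ v : Fin k → ℝ,
      cmin * ∑ j, (v j) ^ 2 ≤ ∑ j, v j * ((1 / (n : ℝ)) • (Xᵀ * X)).mulVec v j)
    (βhat : Fin k → ℝ)
    (hmin : ∀ β : Fin k → ℝ, lassoObj X y lam βhat ≤ lassoObj X y lam β) :
    linf hk (βhat - βstar) ≤
      lam * Real.sqrt k / cmin +
        linf hk (((1 / (n : ℝ)) • (Xᵀ * X))⁻¹.mulVec ((1 / (n : ℝ)) • Xᵀ.mulVec ε)) := by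
  have hn' : (0:ℝ) < n := by exact_mod_cast hn
  set A : Matrix (Fin k) (Fin k) ℝ := (1 / (n : ℝ)) • (Xᵀ * X) with hA
  set b : Fin k → ℝ := (1 / (n : ℝ)) • Xᵀ.mulVec ε with hb
  set r : Fin n → ℝ := fun i => y i - X.mulVec βhat i with hr
  set g : Fin k → ℝ := fun j => -((1 / (n:ℝ)) * ∑ i, X i j * r i) with hg
  -- Step 1 : gradient bound |g j| ≤ lam
  have hgle : ∀ j, |g j| ≤ lam := by
    intro j
    set S1 : ℝ := ∑ i, X i j * r i with hS1
    set S2 : ℝ := ∑ i, (X i j)^2 with hS2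
    have hS2nn : 0 ≤ S2 := Finset.sum_nonneg fun i _ => sq_nonneg _
    have key : ∀ t : ℝ, 0 ≤ t * g j + t^2 * S2 / (2*n) + lam * |t| := by
      intro t
      set e : Fin k → ℝ := Pi.single j 1 with he
      have hβ' : βhat + t • e = Function.update βhat j (βhat j + t) := by
        ext j'
        by_cases h : j' = j
        · subst h; simp [he]
        · simp [he, Function.update_of_ne h, Pi.single_apply, h]
      have hq : ∀ i, y i - X.mulVec (βhat + t • e) i = r i - t * X i j := by
        intro i
        simp [he, Matrix.mulVec_add, Matrix.mulVec_smul, hr]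
        ring
      have hsum1 : ∑ i, (y i - X.mulVec (βhat + t • e) i)^2
          = ∑ i, r i ^2 + (-2*t) * S1 + t^2 * S2 := by
        simp only [hq]
        rw [hS1, hS2, Finset.mul_sum, Finset.mul_sum, ← Finset.sum_add_distrib,
          ← Finset.sum_add_distrib]
        refine Finset.sum_congr rfl fun i _ => by ring
      have habs : ∑ j', |(βhat + t • e) j'|
          = |βhat j + t| + ∑ j' ∈ Finset.univ.erase j, |βhat j'| := by
        rw [hβ']
        have : ∀ j', |Function.update βhat j (βhat j + t) j'|
            = Function.update (fun x => |βhat x|) j (|βhat j + t|) j' := by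
          intro j'
          by_cases h : j' = j
          · subst h; simp
          · simp [Function.update_of_ne h]
        simp only [this]
        rw [Finset.sum_update_of_mem (Finset.mem_univ j), Finset.sdiff_singleton_eq_erase]
      have habs0 : ∑ j', |βhat j'| = |βhat j| + ∑ j' ∈ Finset.univ.erase j, |βhat j'| :=
        (Finset.add_sum_erase _ _ (Finset.mem_univ j)).symm
      have hmin' := hmin (βhat + t • e)
      rw [lassoObj, lassoObj, hsum1, habs, habs0] at hmin'
      have hexp : (1 / (2 * (n:ℝ))) * (∑ i, r i ^2 + (-2*t) * S1 + t^2 * S2)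
            + lam * (|βhat j + t| + ∑ j' ∈ Finset.univ.erase j, |βhat j'|)
            - ((1 / (2 * (n:ℝ))) * ∑ i, r i ^2
              + lam * (|βhat j| + ∑ j' ∈ Finset.univ.erase j, |βhat j'|))
          = t * g j + t^2 * S2 / (2*n) + lam * (|βhat j + t| - |βhat j|) := by
        rw [hg]
        field_simp
        ring
      have h1 : 0 ≤ t * g j + t^2 * S2 / (2*n) + lam * (|βhat j + t| - |βhat j|) := by
        rw [← hexp]
        simp only [hr] at hmin' ⊢
        linarith
      have h2 : |βhat j + t| - |βhat j| ≤ |t| := by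
        have := abs_sub_abs_le_abs_sub (βhat j + t) (βhat j)
        simpa using this
      nlinarith [hlam.le, abs_nonneg t]
    rw [abs_le]
    constructor
    · rw [neg_le]
      refine le_of_forall_pos_le_add fun δ hδ => ?_
      have hs : 0 < δ * (2*n) / (S2 + 1) := by positivity
      have hk1 := key (δ * (2*n) / (S2 + 1))
      have habs : |δ * (2*n) / (S2 + 1)| = δ * (2*n) / (S2 + 1) := abs_of_pos hs
      rw [habs] at hk1
      have hfrac : (δ * (2*n) / (S2 + 1))^2 * S2 / (2*n) ≤ δ * (δ * (2*n) / (S2 + 1)) := by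
        rw [div_le_iff₀ (by positivity : (0:ℝ) < 2*n)] at *
        have h1 : S2 / (S2 + 1) ≤ 1 := by
          rw [div_le_one (by positivity)]; linarith
        have := mul_le_mul_of_nonneg_left h1 (by positivity : (0:ℝ) ≤ (δ * (2*n) / (S2+1)) * δ * (2*n))
        calc (δ * (2*n) / (S2 + 1))^2 * S2
            = ((δ * (2*n) / (S2+1)) * δ * (2*n)) * (S2 / (S2+1)) := by
              field_simp
          _ ≤ ((δ * (2*n) / (S2+1)) * δ * (2*n)) * 1 := this
          _ = δ * (δ * (2*n) / (S2 + 1)) * (2*n) := by ring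
      -- from key at t = s > 0 : 0 ≤ s*g + s²S2/(2n) + lam*s, so -g ≤ lam + sS2/(2n) ≤ lam + δ
      have : -(g j) * (δ * (2*n) / (S2 + 1)) ≤ (lam + δ) * (δ * (2*n) / (S2 + 1)) := by
        nlinarith
      have := le_of_mul_le_mul_right (by linarith [this] : -(g j) * (δ * (2*n) / (S2+1)) ≤ (lam + δ) * (δ * (2*n) / (S2+1))) hs
      linarith
    · refine le_of_forall_pos_le_add fun δ hδ => ?_
      have hs : 0 < δ * (2*n) / (S2 + 1) := by positivity
      have hk1 := key (-(δ * (2*n) / (S2 + 1)))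
      have habs : |(-(δ * (2*n) / (S2 + 1)))| = δ * (2*n) / (S2 + 1) := by
        rw [abs_neg]; exact abs_of_pos hs
      rw [habs] at hk1
      have hfrac : (δ * (2*n) / (S2 + 1))^2 * S2 / (2*n) ≤ δ * (δ * (2*n) / (S2 + 1)) := by
        rw [div_le_iff₀ (by positivity : (0:ℝ) < 2*n)] at *
        have h1 : S2 / (S2 + 1) ≤ 1 := by
          rw [div_le_one (by positivity)]; linarith
        have := mul_le_mul_of_nonneg_left h1 (by positivity : (0:ℝ) ≤ (δ * (2*n) / (S2+1)) * δ * (2*n))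
        calc (δ * (2*n) / (S2 + 1))^2 * S2
            = ((δ * (2*n) / (S2+1)) * δ * (2*n)) * (S2 / (S2+1)) := by
              field_simp
          _ ≤ ((δ * (2*n) / (S2+1)) * δ * (2*n)) * 1 := this
          _ = δ * (δ * (2*n) / (S2 + 1)) * (2*n) := by ring
      have : (g j) * (δ * (2*n) / (S2 + 1)) ≤ (lam + δ) * (δ * (2*n) / (S2 + 1)) := by
        have hsq : (-(δ * (2*n) / (S2 + 1)))^2 = (δ * (2*n) / (S2 + 1))^2 := by ring
        rw [hsq] at hk1
        nlinarith
      have := le_of_mul_le_mul_right this hs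
      linarith
  -- Step 2 : A (βhat - βstar) = g + b
  have hgvec : g = (-(1/(n:ℝ))) • Xᵀ.mulVec r := by
    funext j
    simp only [hg, Pi.smul_apply, smul_eq_mul, Matrix.mulVec, dotProduct,
      Matrix.transpose_apply]
    ring
  have hAvec : A.mulVec (βhat - βstar) = g + b := by
    have hrr : r = X.mulVec (βstar - βhat) + ε := by
      funext i
      simp only [hr, hy, Matrix.mulVec_sub, Pi.add_apply, Pi.sub_apply]
      ring
    rw [hgvec, hrr, hb, hA]
    rw [Matrix.smul_mulVec, ← Matrix.mulVec_mulVec, Matrix.mulVec_sub]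
    funext j
    simp only [Matrix.mulVec_add, Matrix.mulVec_sub, Pi.add_apply, Pi.sub_apply,
      Pi.smul_apply, Pi.neg_apply, smul_eq_mul, neg_smul]
    ring
  -- invertibility via positive definiteness
  have hPD : A.PosDef := by
    rw [Matrix.posDef_iff_dotProduct_mulVec]
    constructor
    · ext i j'
      simp only [Matrix.conjTranspose_apply, star, hA, Matrix.smul_apply, Matrix.mul_apply,
        Matrix.transpose_apply, smul_eq_mul]
      rw [Finset.mul_sum, Finset.mul_sum]
      exact Finset.sum_congr rfl fun l _ => by ring
    · intro x hx
      have hsum : 0 < ∑ j', (x j')^2 := by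
        have : ∃ j', x j' ≠ 0 := by
          by_contra h
          push_neg at h
          exact hx (funext h)
        obtain ⟨j0, hj0⟩ := this
        exact Finset.sum_pos' (fun i _ => sq_nonneg _)
          ⟨j0, Finset.mem_univ _, by positivity⟩
      have := heig x
      have hpos : 0 < cmin * ∑ j', (x j')^2 := mul_pos hc hsum
      have hdp : dotProduct (star x) (A *ᵥ x) = ∑ j', x j' * A.mulVec x j' := by
        simp [dotProduct]
      rw [hdp]
      exact lt_of_lt_of_le hpos this
  have hdet : IsUnit A.det := hPD.det_pos.ne'.isUnit
  -- solve: βhat - βstar = A⁻¹ g + A⁻¹ b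
  have hsolve : βhat - βstar = A⁻¹.mulVec g + A⁻¹.mulVec b := by
    have h1 : A⁻¹.mulVec (A.mulVec (βhat - βstar)) = A⁻¹.mulVec (g + b) := by
      rw [hAvec]
    rw [Matrix.mulVec_mulVec, Matrix.nonsing_inv_mul _ hdet, Matrix.one_mulVec,
      Matrix.mulVec_add] at h1
    exact h1
  -- ℓ2 bound on w = A⁻¹ g
  set w : Fin k → ℝ := A⁻¹.mulVec g with hw
  have hAw : A.mulVec w = g := by
    rw [hw, Matrix.mulVec_mulVec, Matrix.mul_nonsing_inv _ hdet, Matrix.one_mulVec]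
  set S : ℝ := ∑ j', (w j')^2 with hS
  have hSnn : 0 ≤ S := Finset.sum_nonneg fun i _ => sq_nonneg _
  have hCS : cmin * S ≤ lam * Real.sqrt k * Real.sqrt S := by
    have h1 : cmin * S ≤ ∑ j', w j' * g j' := by
      have h := heig w
      rw [hAw] at h
      rw [hS]
      exact h
    have h2 : ∑ j', w j' * g j' ≤ lam * ∑ j', |w j'| := by
      rw [Finset.mul_sum]
      refine Finset.sum_le_sum fun j' _ => ?_
      calc w j' * g j' ≤ |w j' * g j'| := le_abs_self _
        _ = |w j'| * |g j'| := abs_mul _ _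
        _ ≤ |w j'| * lam := mul_le_mul_of_nonneg_left (hgle j') (abs_nonneg _)
        _ = lam * |w j'| := mul_comm _ _
    have h3 : ∑ j', |w j'| ≤ Real.sqrt S * Real.sqrt k := by
      have hcs := Finset.sum_mul_sq_le_sq_mul_sq Finset.univ (fun j' => |w j'|) (fun _ => (1:ℝ))
      simp only [mul_one, one_pow] at hcs
      have hsq : (∑ j', |w j'|)^2 ≤ S * k := by
        simpa [hS, sq_abs, Finset.sum_const, Finset.card_univ, nsmul_eq_mul, mul_comm] using hcs
      have hnn : 0 ≤ ∑ j', |w j'| := Finset.sum_nonneg fun i _ => abs_nonneg _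
      calc ∑ j', |w j'| = Real.sqrt ((∑ j', |w j'|)^2) := (Real.sqrt_sq hnn).symm
        _ ≤ Real.sqrt (S * k) := Real.sqrt_le_sqrt hsq
        _ = Real.sqrt S * Real.sqrt k := Real.sqrt_mul hSnn _
    calc cmin * S ≤ ∑ j', w j' * g j' := h1
      _ ≤ lam * ∑ j', |w j'| := h2
      _ ≤ lam * (Real.sqrt S * Real.sqrt k) := mul_le_mul_of_nonneg_left h3 hlam.le
      _ = lam * Real.sqrt k * Real.sqrt S := by ring
  have hwbound : ∀ j', |w j'| ≤ lam * Real.sqrt k / cmin := by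
    intro j'
    by_cases hS0 : Real.sqrt S = 0
    · have hSz : S ≤ 0 := by
        rw [← Real.sqrt_eq_zero' ]
        exact hS0
      have hwj : (w j')^2 ≤ S := by
        rw [hS]
        exact Finset.single_le_sum (fun i _ => sq_nonneg (w i)) (Finset.mem_univ j')
      have hwz : |w j'| = 0 := by
        have h0 : (w j')^2 ≤ 0 := le_trans hwj hSz
        have h1 : (w j')^2 = 0 := le_antisymm h0 (sq_nonneg _)
        have := pow_eq_zero_iff (n := 2) (by norm_num) |>.mp h1
        simp [this]
      rw [hwz]
      positivity
    · have hSpos : 0 < Real.sqrt S := lt_of_le_of_ne (Real.sqrt_nonneg S) (Ne.symm hS0)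
      have hSS : Real.sqrt S * Real.sqrt S = S := Real.mul_self_sqrt hSnn
      have h1 : cmin * Real.sqrt S ≤ lam * Real.sqrt k := by
        have : cmin * Real.sqrt S * Real.sqrt S ≤ lam * Real.sqrt k * Real.sqrt S := by
          calc cmin * Real.sqrt S * Real.sqrt S = cmin * S := by rw [mul_assoc, hSS]
            _ ≤ lam * Real.sqrt k * Real.sqrt S := hCS
        exact le_of_mul_le_mul_right this hSpos
      have h2 : |w j'| ≤ Real.sqrt S := by
        have hwj : (w j')^2 ≤ S := Finset.single_le_sum (fun i _ => sq_nonneg (w i)) (Finset.mem_univ j')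
        calc |w j'| = Real.sqrt ((w j')^2) := (Real.sqrt_sq_eq_abs _).symm
          _ ≤ Real.sqrt S := Real.sqrt_le_sqrt hwj
      calc |w j'| ≤ Real.sqrt S := h2
        _ ≤ lam * Real.sqrt k / cmin := by
          rw [le_div_iff₀ hc]
          linarith
  -- conclusion
  rw [linf]
  apply Finset.sup'_le
  intro j _
  have hsplit : (βhat - βstar) j = w j + (A⁻¹.mulVec b) j := by
    rw [hsolve]; rfl
  have hb2 : |(A⁻¹.mulVec b) j| ≤ linf hk (A⁻¹.mulVec b) :=
    Finset.le_sup' (f := fun j => |(A⁻¹.mulVec b) j|) (Finset.mem_univ j)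
  calc |(βhat - βstar) j| = |w j + (A⁻¹.mulVec b) j| := by rw [hsplit]
    _ ≤ |w j| + |(A⁻¹.mulVec b) j| := abs_add_le _ _
    _ ≤ lam * Real.sqrt k / cmin + linf hk (A⁻¹.mulVec b) := add_le_add (hwbound j) hb2
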